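/- arXiv:1706.00643 — 2 statements merged into one kernel-verified Lean document; each statement's English description precedes it below -/
import Mathlib

section
/- Let A be an n×n matrix over the max-plus algebra with finite spectral radius λ, and let x = (λ⁻¹A)* u for any regular u ∈ ℝⁿ. Then x is regular and x⁻ A x = λ; hence the minimum of x⁻ A x over regular vectors x equals λ. -/
open Finset

/-- The max-plus identity matrix: `0` on the diagonal, `-∞` elsewhere. -/
noncomputable def mpId (n : ℕ) : Fin n → Fin n → WithBot ℝ :=
  fun i j => if i = j then ((0 : ℝ) : WithBot ℝ) else ⊥

/-- Max-plus matrix multiplication. -/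
noncomputable def mpMul {n : ℕ} (A B : Fin n → Fin n → WithBot ℝ) :
    Fin n → Fin n → WithBot ℝ :=
  fun i j => univ.sup fun k => A i k + B k j

/-- Max-plus matrix power. -/
noncomputable def mpPow {n : ℕ} (A : Fin n → Fin n → WithBot ℝ) :
    ℕ → Fin n → Fin n → WithBot ℝ
  | 0 => mpId n
  | m + 1 => mpMul A (mpPow A m)

/-- Max-plus trace: the maximum diagonal entry. -/
noncomputable def mpTr {n : ℕ} (A : Fin n → Fin n → WithBot ℝ) : WithBot ℝ :=
  univ.sup fun i => A i i

/-- The Kleene star `A* = I ⊕ A ⊕ ⋯ ⊕ A^(n-1)`. -/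
noncomputable def mpStar {n : ℕ} (A : Fin n → Fin n → WithBot ℝ) :
    Fin n → Fin n → WithBot ℝ :=
  fun i j => (range n).sup fun m => mpPow A m i j

/-- Conjugate transpose: entry `(i,j)` is `-a_{ji}` if `a_{ji} ≠ -∞`, else `-∞`. -/
noncomputable def mpConj {m n : ℕ} (A : Fin m → Fin n → WithBot ℝ) :
    Fin n → Fin m → WithBot ℝ :=
  fun i j => WithBot.map (fun a => -a) (A j i)

/-- Max-plus matrix-vector product. -/
noncomputable def mpMulVec {n : ℕ} (A : Fin n → Fin n → WithBot ℝ)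
    (x : Fin n → WithBot ℝ) : Fin n → WithBot ℝ :=
  fun i => univ.sup fun j => A i j + x j

/-- The max-plus spectral radius `λ = max_{1≤m≤n} tr(A^m)/m`. -/
noncomputable def mpLam {n : ℕ} (A : Fin n → Fin n → WithBot ℝ) : WithBot ℝ :=
  (Icc 1 n).sup fun m => WithBot.map (fun a => a / (m : ℝ)) (mpTr (mpPow A m))

/-- The objective `x⁻ A x = max_{i,j} (−x_i + a_{ij} + x_j)`. -/
noncomputable def mpObj {n : ℕ} (A : Fin n → Fin n → WithBot ℝ)
    (x : Fin n → WithBot ℝ) : WithBot ℝ :=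
  univ.sup fun i => univ.sup fun j => WithBot.map (fun a => -a) (x i) + A i j + x j


lemma mp_add_sup (a b c : WithBot ℝ) : a + (b ⊔ c) = (a+b) ⊔ (a+c) := by
  rcases le_total b c with h|h
  · rw [sup_eq_right.2 h, sup_eq_right.2 (add_le_add_right h a)]
  · rw [sup_eq_left.2 h, sup_eq_left.2 (add_le_add_right h a)]

lemma mp_sup_add (a b c : WithBot ℝ) : (b ⊔ c) + a = (b+a) ⊔ (c+a) := by
  rcases le_total b c with h|h
  · rw [sup_eq_right.2 h, sup_eq_right.2 (add_le_add_left h a)]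
  · rw [sup_eq_left.2 h, sup_eq_left.2 (add_le_add_left h a)]

lemma mp_add_finsetSup {α : Type*} (s : Finset α) (f : α → WithBot ℝ) (c : WithBot ℝ) :
    c + s.sup f = s.sup (fun a => c + f a) :=
  Finset.comp_sup_eq_sup_comp (c + ·) (fun x y => mp_add_sup c x y) (WithBot.add_bot c)

lemma mp_finsetSup_add {α : Type*} (s : Finset α) (f : α → WithBot ℝ) (c : WithBot ℝ) :
    s.sup f + c = s.sup (fun a => f a + c) :=
  Finset.comp_sup_eq_sup_comp (· + c) (fun x y => mp_sup_add c x y) (WithBot.bot_add c)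

lemma mp_map_mono {f : ℝ → ℝ} (hf : Monotone f) {a b : WithBot ℝ} (h : a ≤ b) :
    WithBot.map f a ≤ WithBot.map f b := by
  cases a with
  | bot => exact bot_le
  | coe a => cases b with
    | bot => simp at h
    | coe b => exact WithBot.coe_le_coe.2 (hf (WithBot.coe_le_coe.1 h))

lemma mp_map_sup {f : ℝ → ℝ} (hf : Monotone f) (x y : WithBot ℝ) :
    WithBot.map f (x ⊔ y) = WithBot.map f x ⊔ WithBot.map f y := by
  rcases le_total x y with h|h
  · rw [sup_eq_right.2 h, sup_eq_right.2 (mp_map_mono hf h)]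
  · rw [sup_eq_left.2 h, sup_eq_left.2 (mp_map_mono hf h)]

lemma mp_map_finsetSup {α : Type*} {f : ℝ → ℝ} (hf : Monotone f) (s : Finset α)
    (g : α → WithBot ℝ) : WithBot.map f (s.sup g) = s.sup (fun a => WithBot.map f (g a)) :=
  Finset.comp_sup_eq_sup_comp (WithBot.map f) (fun x y => mp_map_sup hf x y) rfl

lemma mp_map_sub_add (a b : WithBot ℝ) (c d : ℝ) :
    WithBot.map (· - c) a + WithBot.map (· - d) b = WithBot.map (· - (c+d)) (a+b) := by
  cases a with
  | bot => simp
  | coe a => cases b with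
    | bot => simp
    | coe b =>
      simp only [WithBot.map_coe, ← WithBot.coe_add, WithBot.map_coe, WithBot.coe_inj]
      ring

lemma mp_add_coe_le_add_coe {a b : WithBot ℝ} (c : ℝ) (h : a + (c:WithBot ℝ) ≤ b + c) : a ≤ b := by
  cases a with
  | bot => exact bot_le
  | coe a => cases b with
    | bot => simp [← WithBot.coe_add] at h
    | coe b =>
      rw [← WithBot.coe_add, ← WithBot.coe_add, WithBot.coe_le_coe] at h
      exact_mod_cast (add_le_add_iff_right c).1 h

lemma mp_abel_test (a b c : WithBot ℝ) : a + (b + c) = b + (a + c) := by abel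
section Paths
variable {n : ℕ} (B : Fin n → Fin n → WithBot ℝ)

/-- Weight of a path of length `m`. -/
noncomputable def mpW (m : ℕ) (p : ℕ → Fin n) : WithBot ℝ :=
  ∑ t ∈ range m, B (p t) (p (t+1))

lemma mpW_split (a b : ℕ) (p : ℕ → Fin n) :
    mpW B (a+b) p = mpW B a p + mpW B b (fun t => p (a+t)) := by
  unfold mpW
  rw [Finset.sum_range_add]
  simp [Nat.add_assoc]

lemma mpW_le_pow (m : ℕ) (p : ℕ → Fin n) : mpW B m p ≤ mpPow B m (p 0) (p m) := by
  induction m generalizing p with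
  | zero => simp [mpW, mpPow, mpId]
  | succ m IH =>
    have h1 : mpW B (m+1) p = B (p 0) (p 1) + mpW B m (fun t => p (t+1)) := by
      unfold mpW
      rw [Finset.sum_range_succ']
      rw [add_comm]
    rw [h1]
    have h2 := IH (fun t => p (t+1))
    calc B (p 0) (p 1) + mpW B m (fun t => p (t+1))
        ≤ B (p 0) (p 1) + mpPow B m (p 1) (p (m+1)) := add_le_add_right h2 _
      _ ≤ mpPow B (m+1) (p 0) (p (m+1)) :=
          Finset.le_sup (f := fun k => B (p 0) k + mpPow B m k (p (m+1))) (mem_univ (p 1))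

lemma mp_exists_path (hn : 0 < n) (m : ℕ) (i j : Fin n) (hb : mpPow B m i j ≠ ⊥) :
    ∃ p : ℕ → Fin n, p 0 = i ∧ p m = j ∧ mpPow B m i j = mpW B m p := by
  induction m generalizing i with
  | zero =>
    by_cases h : i = j
    · subst h
      exact ⟨fun _ => i, rfl, rfl, by simp [mpPow, mpId, mpW]⟩
    · exact absurd (by simp [mpPow, mpId, h]) hb
  | succ m IH =>
    have hne : (univ : Finset (Fin n)).Nonempty := ⟨i, mem_univ i⟩
    obtain ⟨k, -, hk⟩ := Finset.exists_mem_eq_sup univ hne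
      (fun k => B i k + mpPow B m k j)
    have hpow : mpPow B (m+1) i j = B i k + mpPow B m k j := hk
    have hbk : mpPow B m k j ≠ ⊥ := by
      intro h
      rw [hpow, h, WithBot.add_bot] at hb
      exact hb rfl
    obtain ⟨p, hp0, hpm, hpw⟩ := IH k hbk
    refine ⟨fun t => if t = 0 then i else p (t-1), by simp, by simp [hpm], ?_⟩
    have h1 : mpW B (m+1) (fun t => if t = 0 then i else p (t-1))
        = B i (p 0) + mpW B m p := by
      unfold mpW
      rw [Finset.sum_range_succ']
      rw [add_comm]
      simp
    rw [hpow, h1, hp0, hpw]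

lemma mp_pow_add_le (a b : ℕ) (i k j : Fin n) :
    mpPow B a i k + mpPow B b k j ≤ mpPow B (a+b) i j := by
  induction a generalizing i with
  | zero =>
    by_cases h : i = k
    · subst h
      have h0 : mpPow B 0 i i = 0 := by simp [mpPow, mpId]
      rw [h0, zero_add, Nat.zero_add]
    · simp [mpPow, mpId, h]
  | succ a IH =>
    show mpMul B (mpPow B a) i k + _ ≤ _
    unfold mpMul
    rw [mp_finsetSup_add]
    apply Finset.sup_le
    intro r _
    have : B i r + mpPow B a r k + mpPow B b k j ≤ B i r + mpPow B (a+b) r j := by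
      rw [add_assoc]
      exact add_le_add_right (IH r) _
    refine le_trans this ?_
    have : a + 1 + b = (a + b) + 1 := by omega
    rw [this]
    exact Finset.le_sup (f := fun r => B i r + mpPow B (a+b) r j) (mem_univ r)

lemma mp_pow_one (i j : Fin n) : mpPow B 1 i j = B i j := by
  apply le_antisymm
  · show mpMul B (mpPow B 0) i j ≤ B i j
    unfold mpMul
    apply Finset.sup_le
    intro k _
    by_cases h : k = j
    · subst h; simp [mpPow, mpId]
    · simp [mpPow, mpId, h]
  · have := Finset.le_sup (f := fun k => B i k + mpPow B 0 k j) (mem_univ j)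
    simpa [mpPow, mpId, mpMul] using this

end Paths
section Shift
variable {n : ℕ} (A : Fin n → Fin n → WithBot ℝ) (l : ℝ)

lemma mp_pow_shift (m : ℕ) (i j : Fin n) :
    mpPow (fun i j => WithBot.map (fun a => a - l) (A i j)) m i j
      = WithBot.map (fun a => a - m * l) (mpPow A m i j) := by
  induction m generalizing i j with
  | zero =>
    simp only [mpPow, mpId, Nat.cast_zero, zero_mul]
    by_cases h : i = j <;> simp [h]
  | succ m IH =>
    have key : ∀ k : Fin n,
        WithBot.map (fun a => a - l) (A i k)
          + mpPow (fun i j => WithBot.map (fun a => a - l) (A i j)) m k j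
        = WithBot.map (fun a => a - ((m+1:ℕ) * l)) (A i k + mpPow A m k j) := by
      intro k
      rw [IH]
      rw [show (fun a => a - l) = (· - l) from rfl,
        show (fun a => a - (m:ℕ) * l) = (· - (m:ℕ)*l) from rfl, mp_map_sub_add]
      congr 1
      funext a
      push_cast
      ring
    calc mpPow (fun i j => WithBot.map (fun a => a - l) (A i j)) (m+1) i j
        = univ.sup (fun k => WithBot.map (fun a => a - ((m+1:ℕ)*l)) (A i k + mpPow A m k j)) := by
          show mpMul (fun i j => WithBot.map (fun a => a - l) (A i j))
            (mpPow (fun i j => WithBot.map (fun a => a - l) (A i j)) m) i j = _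
          unfold mpMul
          exact Finset.sup_congr rfl (fun k _ => key k)
      _ = WithBot.map (fun a => a - ((m+1:ℕ)*l)) (univ.sup (fun k => A i k + mpPow A m k j)) :=
          (mp_map_finsetSup (f := fun a => a - ((m+1:ℕ)*l))
            (fun x y h => sub_le_sub_right h _) univ
            (fun k => A i k + mpPow A m k j)).symm
      _ = WithBot.map (fun a => a - ((m+1:ℕ)*l)) (mpPow A (m+1) i j) := rfl

lemma mp_tr_shift (m : ℕ) :
    mpTr (mpPow (fun i j => WithBot.map (fun a => a - l) (A i j)) m)
      = WithBot.map (fun a => a - m * l) (mpTr (mpPow A m)) := by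
  calc mpTr (mpPow (fun i j => WithBot.map (fun a => a - l) (A i j)) m)
      = univ.sup (fun i => WithBot.map (fun a => a - (m:ℕ)*l) (mpPow A m i i)) := by
        unfold mpTr
        exact Finset.sup_congr rfl (fun i _ => mp_pow_shift A l m i i)
    _ = WithBot.map (fun a => a - (m:ℕ)*l) (univ.sup fun i => mpPow A m i i) :=
        (mp_map_finsetSup (f := fun a => a - (m:ℕ)*l)
          (fun x y h => sub_le_sub_right h _) univ (fun i => mpPow A m i i)).symm

lemma mp_tr_le (hl : mpLam A = (l : WithBot ℝ)) (k : ℕ) (hk : k ∈ Icc 1 n) :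
    mpTr (mpPow (fun i j => WithBot.map (fun a => a - l) (A i j)) k) ≤ 0 := by
  have h1 : WithBot.map (fun a => a / (k:ℝ)) (mpTr (mpPow A k)) ≤ (l : WithBot ℝ) := by
    rw [← hl]
    unfold mpLam
    exact Finset.le_sup (f := fun (m : ℕ) => WithBot.map (fun a => a / (m : ℝ)) (mpTr (mpPow A m))) hk
  rw [mp_tr_shift]
  cases htr : mpTr (mpPow A k) with
  | bot => simp
  | coe t =>
    rw [htr] at h1
    rw [WithBot.map_coe, WithBot.coe_le_coe] at h1
    have hk1 : (1:ℝ) ≤ (k:ℝ) := by exact_mod_cast (Finset.mem_Icc.1 hk).1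
    have ht : t ≤ (k:ℝ) * l := by
      rw [div_le_iff₀ (by linarith)] at h1
      linarith [h1]
    rw [WithBot.map_coe]
    have : ((t - (k:ℝ)*l : ℝ) : WithBot ℝ) ≤ ((0:ℝ) : WithBot ℝ) :=
      WithBot.coe_le_coe.2 (by linarith)
    simpa using this

end Shift
section Star
variable {n : ℕ}

lemma mp_pow_le_star (B : Fin n → Fin n → WithBot ℝ) (hn : 0 < n)
    (htr : ∀ k ∈ Icc 1 n, mpTr (mpPow B k) ≤ 0) (m : ℕ) :
    ∀ i j, mpPow B m i j ≤ mpStar B i j := by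
  induction m using Nat.strong_induction_on with
  | _ m IH =>
  intro i j
  by_cases hm : m < n
  · exact Finset.le_sup (f := fun m => mpPow B m i j) (mem_range.2 hm)
  · push_neg at hm
    by_cases hb : mpPow B m i j = ⊥
    · rw [hb]; exact bot_le
    obtain ⟨p, hp0, hpm, hpw⟩ := mp_exists_path B hn m i j hb
    obtain ⟨v, w, hvw, hpvw⟩ := Fintype.exists_ne_map_eq_of_card_lt
      (fun v : Fin (n+1) => p v) (by simp)
    obtain ⟨s, t, hst, htn, hpe⟩ : ∃ s t : ℕ, s < t ∧ t ≤ n ∧ p s = p t := by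
      rcases lt_or_gt_of_ne hvw with h | h
      · exact ⟨v, w, h, Nat.lt_succ_iff.1 w.isLt, hpvw⟩
      · exact ⟨w, v, h, Nat.lt_succ_iff.1 v.isLt, hpvw.symm⟩
    have htm : t ≤ m := le_trans htn hm
    have hd : m = s + ((t - s) + (m - t)) := by omega
    have hsplit : mpW B m p = mpW B s p + (mpW B (t-s) (fun r => p (s+r))
        + mpW B (m-t) (fun r => p (s + ((t-s) + r)))) := by
      conv_lhs => rw [hd]
      rw [mpW_split, mpW_split]
    have h1 : mpW B s p ≤ mpPow B s i (p s) := by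
      have := mpW_le_pow B s p
      rwa [hp0] at this
    have h2 : mpW B (t-s) (fun r => p (s+r)) ≤ mpPow B (t-s) (p s) (p s) := by
      have := mpW_le_pow B (t-s) (fun r => p (s+r))
      rwa [show s + 0 = s from rfl, show s + (t-s) = t by omega, ← hpe] at this
    have h2' : mpPow B (t-s) (p s) (p s) ≤ 0 := by
      refine le_trans (Finset.le_sup (f := fun i => mpPow B (t-s) i i) (mem_univ (p s))) ?_
      exact htr (t-s) (Finset.mem_Icc.2 ⟨by omega, by omega⟩)
    have h3 : mpW B (m-t) (fun r => p (s + ((t-s) + r))) ≤ mpPow B (m-t) (p s) j := by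
      have := mpW_le_pow B (m-t) (fun r => p (s + ((t-s) + r)))
      rwa [show s + ((t-s) + 0) = t by omega, show s + ((t-s)+(m-t)) = m by omega,
        ← hpe, hpm] at this
    calc mpPow B m i j = mpW B m p := hpw
      _ = _ := hsplit
      _ ≤ mpPow B s i (p s) + (mpPow B (t-s) (p s) (p s) + mpPow B (m-t) (p s) j) :=
          add_le_add h1 (add_le_add h2 h3)
      _ ≤ mpPow B s i (p s) + ((0:WithBot ℝ) + mpPow B (m-t) (p s) j) :=
          add_le_add_right (add_le_add_left h2' _) _
      _ = mpPow B s i (p s) + mpPow B (m-t) (p s) j := by rw [zero_add]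
      _ ≤ mpPow B (s + (m-t)) i j := mp_pow_add_le B s (m-t) i (p s) j
      _ ≤ mpStar B i j := IH (s + (m-t)) (by omega) i j

end Star
section Lower
variable {n : ℕ}

lemma mp_obj_term_le (A : Fin n → Fin n → WithBot ℝ) (y : Fin n → WithBot ℝ) (i j : Fin n) :
    WithBot.map (fun a => -a) (y i) + A i j + y j ≤ mpObj A y := by
  refine le_trans ?_ (Finset.le_sup
    (f := fun i => univ.sup fun j => WithBot.map (fun a => -a) (y i) + A i j + y j) (mem_univ i))
  exact Finset.le_sup (f := fun j => WithBot.map (fun a => -a) (y i) + A i j + y j) (mem_univ j)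

lemma mp_obj_ge (A : Fin n → Fin n → WithBot ℝ) (l : ℝ) (hl : mpLam A = (l:WithBot ℝ))
    (y : Fin n → WithBot ℝ) (hy : ∀ i, y i ≠ ⊥) : (l:WithBot ℝ) ≤ mpObj A y := by
  have hyc : ∀ i, ∃ a : ℝ, y i = (a : WithBot ℝ) := fun i => by
    cases h : y i with
    | bot => exact absurd h (hy i)
    | coe a => exact ⟨a, rfl⟩
  have key : ∀ i j, A i j + y j ≤ mpObj A y + y i := by
    intro i j
    obtain ⟨a, ha⟩ := hyc i
    have h0 := mp_obj_term_le A y i j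
    rw [ha, WithBot.map_coe] at h0
    have heq : (a:WithBot ℝ) + (((-a:ℝ):WithBot ℝ) + A i j + y j) = A i j + y j := by
      rw [show ((-a:ℝ):WithBot ℝ) + A i j + y j = ((-a:ℝ):WithBot ℝ) + (A i j + y j)
          from add_assoc _ _ _,
        ← add_assoc ((a:ℝ):WithBot ℝ), ← WithBot.coe_add]
      norm_num
    calc A i j + y j = (a:WithBot ℝ) + (((-a:ℝ):WithBot ℝ) + A i j + y j) := heq.symm
      _ ≤ (a:WithBot ℝ) + mpObj A y := add_le_add_right h0 _
      _ = mpObj A y + y i := by rw [add_comm, ha]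
  cases hobj : mpObj A y with
  | bot =>
    exfalso
    have hA : ∀ i j, A i j = ⊥ := by
      intro i j
      obtain ⟨a, ha⟩ := hyc i; obtain ⟨b, hb⟩ := hyc j
      have h0 := mp_obj_term_le A y i j
      rw [hobj, le_bot_iff, ha, hb, WithBot.map_coe] at h0
      cases hAij : A i j with
      | bot => rfl
      | coe c =>
        rw [hAij, ← WithBot.coe_add, ← WithBot.coe_add] at h0
        exact absurd h0 (by simp)
    have hpow : ∀ m (i j : Fin n), mpPow A (m+1) i j = ⊥ := by
      intro m i j
      have : (univ.sup fun k => A i k + mpPow A m k j) ≤ ⊥ :=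
        Finset.sup_le (fun k _ => by rw [hA i k, WithBot.bot_add])
      exact le_bot_iff.1 this
    have hlam : mpLam A = ⊥ := by
      unfold mpLam
      apply le_bot_iff.1
      apply Finset.sup_le
      intro k hk
      have hk1 : 1 ≤ k := (Finset.mem_Icc.1 hk).1
      obtain ⟨k', rfl⟩ : ∃ k', k = k'+1 := ⟨k-1, by omega⟩
      have htr0 : mpTr (mpPow A (k'+1)) = ⊥ := by
        apply le_bot_iff.1
        apply Finset.sup_le
        intro i _
        rw [hpow k' i i]
      rw [htr0]
      simp
    rw [hl] at hlam
    exact absurd hlam (by simp)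
  | coe mu =>
    have claim : ∀ m (i j : Fin n), mpPow A m i j + y j ≤ (((m:ℝ) * mu : ℝ) : WithBot ℝ) + y i := by
      intro m
      induction m with
      | zero =>
        intro i j
        by_cases h : i = j
        · subst h
          have h0 : mpPow A 0 i i = 0 := by simp [mpPow, mpId]
          rw [h0, zero_add]
          simp
        · have h0 : mpPow A 0 i j = ⊥ := by simp [mpPow, mpId, h]
          rw [h0, WithBot.bot_add]
          exact bot_le
      | succ m IH =>
        intro i j
        calc mpPow A (m+1) i j + y j
            = univ.sup (fun k => (A i k + mpPow A m k j) + y j) := by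
              show (univ.sup fun k => A i k + mpPow A m k j) + y j = _
              rw [mp_finsetSup_add]
          _ ≤ ((((m+1:ℕ):ℝ) * mu : ℝ) : WithBot ℝ) + y i := by
              apply Finset.sup_le
              intro k _
              rw [add_assoc]
              refine le_trans (add_le_add_right (IH k j) (A i k)) ?_
              rw [show A i k + ((((m:ℝ) * mu : ℝ):WithBot ℝ) + y k)
                  = (((m:ℝ) * mu : ℝ):WithBot ℝ) + (A i k + y k) from by abel]
              have h2 : A i k + y k ≤ ((mu:ℝ):WithBot ℝ) + y i := by
                have hkey := key i k
                rwa [hobj] at hkey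
              refine le_trans (add_le_add_right h2 _) ?_
              rw [← add_assoc, ← WithBot.coe_add]
              apply add_le_add_left
              apply WithBot.coe_le_coe.2
              push_cast
              linarith
    have htr : ∀ m ∈ Icc 1 n,
        WithBot.map (fun a => a / (m:ℝ)) (mpTr (mpPow A m)) ≤ ((mu:ℝ) : WithBot ℝ) := by
      intro m hm
      have hub : mpTr (mpPow A m) ≤ (((m:ℝ) * mu : ℝ) : WithBot ℝ) := by
        apply Finset.sup_le
        intro i _
        obtain ⟨a, ha⟩ := hyc i
        have hc := claim m i i
        rw [ha] at hc
        exact mp_add_coe_le_add_coe a hc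
      cases htrv : mpTr (mpPow A m) with
      | bot => simp
      | coe tv =>
        rw [htrv, WithBot.coe_le_coe] at hub
        rw [WithBot.map_coe, WithBot.coe_le_coe]
        have hm1 : (1:ℝ) ≤ (m:ℝ) := by exact_mod_cast (Finset.mem_Icc.1 hm).1
        rw [div_le_iff₀ (by linarith), mul_comm]
        exact hub
    rw [← hl]
    unfold mpLam
    exact Finset.sup_le htr

end Lower
/-- If `A` has finite spectral radius `λ` and `x = (λ⁻¹A)* u` for a regular
`u ∈ ℝⁿ`, then `x` is regular and `x⁻ A x = λ`; hence the minimum of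
`x⁻ A x` over regular vectors equals `λ`. -/
theorem maxplus_min_xAx (n : ℕ) (A : Fin n → Fin n → WithBot ℝ) (l : ℝ)
    (hl : mpLam A = (l : WithBot ℝ)) (u : Fin n → ℝ)
    (x : Fin n → WithBot ℝ)
    (hx : x = mpMulVec (mpStar (fun i j => WithBot.map (fun a => a - l) (A i j)))
        (fun j => ((u j : ℝ) : WithBot ℝ))) :
    (∀ i : Fin n, x i ≠ ⊥) ∧ mpObj A x = ((l : ℝ) : WithBot ℝ) ∧
    IsLeast {v : WithBot ℝ | ∃ y : Fin n → WithBot ℝ,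
        (∀ i, y i ≠ ⊥) ∧ v = mpObj A y} ((l : ℝ) : WithBot ℝ) := by
  have hn : 0 < n := by
    rcases Nat.eq_zero_or_pos n with h | h
    · exfalso
      subst h
      have hempty : mpLam A = ⊥ := by
        unfold mpLam
        rw [Finset.Icc_eq_empty (by omega), Finset.sup_empty]
      rw [hempty] at hl
      exact absurd hl (by simp)
    · exact h
  have htr := mp_tr_le A l hl
  have hps := mp_pow_le_star (fun i j => WithBot.map (fun a => a - l) (A i j)) hn htr
  set B : Fin n → Fin n → WithBot ℝ := fun i j => WithBot.map (fun a => a - l) (A i j)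
    with hB
  have hstar0 : ∀ i, (0 : WithBot ℝ) ≤ mpStar B i i := by
    intro i
    have h0 : mpPow B 0 i i = 0 := by simp [mpPow, mpId]
    rw [← h0]
    exact Finset.le_sup (f := fun m => mpPow B m i i) (mem_range.2 hn)
  have hxu : ∀ i, ((u i : ℝ) : WithBot ℝ) ≤ x i := by
    intro i
    rw [hx]
    show _ ≤ univ.sup fun j => mpStar B i j + ((u j : ℝ) : WithBot ℝ)
    refine le_trans ?_ (Finset.le_sup
      (f := fun j => mpStar B i j + ((u j : ℝ) : WithBot ℝ)) (mem_univ i))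
    calc ((u i : ℝ) : WithBot ℝ) = 0 + ((u i : ℝ) : WithBot ℝ) := (zero_add _).symm
      _ ≤ mpStar B i i + ((u i : ℝ) : WithBot ℝ) := add_le_add_left (hstar0 i) _
  have hreg : ∀ i, x i ≠ ⊥ := by
    intro i h
    have h2 := hxu i
    rw [h] at h2
    exact (WithBot.not_coe_le_bot _) h2
  have hBstar : ∀ i j k, B i j + mpStar B j k ≤ mpStar B i k := by
    intro i j k
    rw [show mpStar B j k = (range n).sup (fun m => mpPow B m j k) from rfl,
      mp_add_finsetSup]
    apply Finset.sup_le
    intro m _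
    have h1 : B i j + mpPow B m j k ≤ mpPow B (1+m) i k := by
      rw [← mp_pow_one B i j]
      exact mp_pow_add_le B 1 m i j k
    exact le_trans h1 (hps (1+m) i k)
  have hBx : ∀ i j, B i j + x j ≤ x i := by
    intro i j
    rw [hx]
    show B i j + (univ.sup fun k => mpStar B j k + ((u k : ℝ) : WithBot ℝ))
      ≤ univ.sup fun k => mpStar B i k + ((u k : ℝ) : WithBot ℝ)
    rw [mp_add_finsetSup]
    apply Finset.sup_le
    intro k _
    rw [← add_assoc]
    exact le_trans (add_le_add_left (hBstar i j k) _)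
      (Finset.le_sup (f := fun k => mpStar B i k + ((u k : ℝ) : WithBot ℝ)) (mem_univ k))
  have hABw : ∀ i j (w : WithBot ℝ), A i j + w = (B i j + w) + (l : WithBot ℝ) := by
    intro i j w
    simp only [hB]
    cases hA : A i j with
    | bot => simp
    | coe a =>
      cases w with
      | bot => simp
      | coe b =>
        simp only [WithBot.map_coe, ← WithBot.coe_add, WithBot.coe_inj]
        ring
  have hub : mpObj A x ≤ (l : WithBot ℝ) := by
    unfold mpObj
    apply Finset.sup_le
    intro i _
    apply Finset.sup_le
    intro j _
    obtain ⟨a, ha⟩ : ∃ a : ℝ, x i = (a : WithBot ℝ) := by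
      cases h : x i with
      | bot => exact absurd h (hreg i)
      | coe a => exact ⟨a, rfl⟩
    rw [ha, WithBot.map_coe, add_assoc]
    have h1 : A i j + x j ≤ (a : WithBot ℝ) + (l : WithBot ℝ) := by
      rw [hABw i j (x j)]
      have h2 := hBx i j
      rw [ha] at h2
      exact add_le_add_left h2 _
    calc ((-a : ℝ) : WithBot ℝ) + (A i j + x j)
        ≤ ((-a : ℝ) : WithBot ℝ) + ((a : WithBot ℝ) + (l : WithBot ℝ)) :=
          add_le_add_right h1 _
      _ = (l : WithBot ℝ) := by
          rw [← add_assoc, ← WithBot.coe_add]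
          norm_num
  have hge : (l : WithBot ℝ) ≤ mpObj A x := mp_obj_ge A l hl x hreg
  have hobj : mpObj A x = (l : WithBot ℝ) := le_antisymm hub hge
  refine ⟨hreg, hobj, ⟨⟨x, hreg, hobj.symm⟩, ?_⟩⟩
  rintro v ⟨y, hy, rfl⟩
  exact mp_obj_ge A l hl y hy
end

section
/- Let A, A_k be n×n max-plus matrices with A_k ≤ A entrywise, each row of A_k having exactly one finite entry, and λ₁ ∈ ℝ. Define B_k = A_k⁻ (A ⊕ λ₁ I) and assume Tr(B_k) ≤ 𝟙. Then for any regular u ∈ ℝⁿ, the vector x = B_k* u satisfies x ≤ λ₁⁻¹ A x. -/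
open Finset

private lemma wb_add_max (a b c : WithBot ℝ) : a + (b ⊔ c) = (a + b) ⊔ (a + c) := by
  rcases le_total b c with h | h
  · rw [sup_eq_right.2 h, sup_eq_right.2 (add_le_add_right h a)]
  · rw [sup_eq_left.2 h, sup_eq_left.2 (add_le_add_right h a)]

private lemma wb_max_add (a b c : WithBot ℝ) : (a ⊔ b) + c = (a + c) ⊔ (b + c) := by
  rw [add_comm, wb_add_max, add_comm c a, add_comm c b]

private lemma sup_add_distrib {α : Type*} (s : Finset α) (f : α → WithBot ℝ) (c : WithBot ℝ) :
    s.sup f + c = s.sup fun a => f a + c := by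
  induction s using Finset.cons_induction with
  | empty => simp
  | cons a s ha ih => rw [Finset.sup_cons, Finset.sup_cons, wb_max_add, ih]

private lemma add_sup_distrib {α : Type*} (s : Finset α) (f : α → WithBot ℝ) (c : WithBot ℝ) :
    c + s.sup f = s.sup fun a => c + f a := by
  induction s using Finset.cons_induction with
  | empty => simp
  | cons a s ha ih => rw [Finset.sup_cons, Finset.sup_cons, wb_add_max, ih]

private lemma wb_cancel (b : ℝ) (w : WithBot ℝ) :
    ((-b : ℝ) : WithBot ℝ) + (((b : ℝ) : WithBot ℝ) + w) = w := by
  rw [← add_assoc, ← WithBot.coe_add, neg_add_cancel, WithBot.coe_zero, zero_add]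

lemma mpMul_assoc {n : ℕ} (A B C : Fin n → Fin n → WithBot ℝ) :
    mpMul (mpMul A B) C = mpMul A (mpMul B C) := by
  funext i j
  show (univ.sup fun k => (univ.sup fun l => A i l + B l k) + C k j)
      = univ.sup fun l => A i l + univ.sup fun k => B l k + C k j
  calc (univ.sup fun k => (univ.sup fun l => A i l + B l k) + C k j)
      = univ.sup fun k => univ.sup fun l => A i l + B l k + C k j :=
        Finset.sup_congr rfl fun k _ => sup_add_distrib _ _ _
    _ = univ.sup fun l => univ.sup fun k => A i l + B l k + C k j := Finset.sup_comm _ _ _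
    _ = univ.sup fun l => A i l + univ.sup fun k => B l k + C k j := by
        refine Finset.sup_congr rfl fun l _ => ?_
        rw [add_sup_distrib]
        exact Finset.sup_congr rfl fun k _ => add_assoc _ _ _

lemma mpMulVec_mul {n : ℕ} (A B : Fin n → Fin n → WithBot ℝ) (v : Fin n → WithBot ℝ) :
    mpMulVec (mpMul A B) v = mpMulVec A (mpMulVec B v) := by
  funext i
  show (univ.sup fun j => (univ.sup fun k => A i k + B k j) + v j)
      = univ.sup fun k => A i k + univ.sup fun j => B k j + v j
  calc (univ.sup fun j => (univ.sup fun k => A i k + B k j) + v j)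
      = univ.sup fun j => univ.sup fun k => A i k + B k j + v j :=
        Finset.sup_congr rfl fun j _ => sup_add_distrib _ _ _
    _ = univ.sup fun k => univ.sup fun j => A i k + B k j + v j := Finset.sup_comm _ _ _
    _ = univ.sup fun k => A i k + univ.sup fun j => B k j + v j := by
        refine Finset.sup_congr rfl fun k _ => ?_
        rw [add_sup_distrib]
        exact Finset.sup_congr rfl fun j _ => add_assoc _ _ _

lemma mpMul_le_mul_left {n : ℕ} {A A' : Fin n → Fin n → WithBot ℝ}
    (h : ∀ i j, A i j ≤ A' i j) (C : Fin n → Fin n → WithBot ℝ) :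
    ∀ i j, mpMul A C i j ≤ mpMul A' C i j := fun i j =>
  Finset.sup_mono_fun fun k _ => add_le_add_left (h i k) _

lemma mpMulVec_le_mat {n : ℕ} {A A' : Fin n → Fin n → WithBot ℝ}
    (h : ∀ i j, A i j ≤ A' i j) (v : Fin n → WithBot ℝ) :
    ∀ i, mpMulVec A v i ≤ mpMulVec A' v i := fun i =>
  Finset.sup_mono_fun fun j _ => add_le_add_left (h i j) _

lemma mpMulVec_le_vec {n : ℕ} (A : Fin n → Fin n → WithBot ℝ) {v w : Fin n → WithBot ℝ}
    (h : ∀ j, v j ≤ w j) : ∀ i, mpMulVec A v i ≤ mpMulVec A w i := fun i =>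
  Finset.sup_mono_fun fun j _ => add_le_add_right (h j) _

noncomputable def pathW {n : ℕ} (B : Fin n → Fin n → WithBot ℝ) (m : ℕ) (p : ℕ → Fin n) :
    WithBot ℝ :=
  ∑ t ∈ Finset.range m, B (p t) (p (t + 1))

lemma pathW_succ' {n : ℕ} (B : Fin n → Fin n → WithBot ℝ) (m : ℕ) (p : ℕ → Fin n) :
    pathW B (m + 1) p = B (p 0) (p 1) + pathW B m (fun t => p (t + 1)) := by
  unfold pathW
  rw [Finset.sum_range_succ', add_comm]

lemma pathW_le_pow {n : ℕ} (B : Fin n → Fin n → WithBot ℝ) :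
    ∀ (m : ℕ) (p : ℕ → Fin n), pathW B m p ≤ mpPow B m (p 0) (p m)
  | 0, p => by simp [pathW, mpPow, mpId]
  | (m+1), p => by
      rw [pathW_succ']
      have h1 := pathW_le_pow B m (fun t => p (t + 1))
      calc B (p 0) (p 1) + pathW B m (fun t => p (t + 1))
          ≤ B (p 0) (p 1) + mpPow B m (p 1) (p (m + 1)) := add_le_add_right h1 _
        _ ≤ mpPow B (m+1) (p 0) (p (m+1)) :=
            Finset.le_sup (f := fun k => B (p 0) k + mpPow B m k (p (m+1))) (mem_univ (p 1))

lemma pow_le_of_paths {n : ℕ} (B : Fin n → Fin n → WithBot ℝ) (j : Fin n) :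
    ∀ (m : ℕ) (i : Fin n) (c : WithBot ℝ),
      (∀ p : ℕ → Fin n, p 0 = i → p m = j → pathW B m p ≤ c) → mpPow B m i j ≤ c
  | 0, i, c, h => by
      by_cases hij : i = j
      · subst hij
        have := h (fun _ => i) rfl rfl
        simpa [pathW, mpPow, mpId] using this
      · simp [mpPow, mpId, hij]
  | (m+1), i, c, h => by
      show (univ.sup fun k => B i k + mpPow B m k j) ≤ c
      refine Finset.sup_le fun k _ => ?_
      cases hb : B i k with
      | bot => simp
      | coe b =>
        have hkey : mpPow B m k j ≤ ((-b : ℝ) : WithBot ℝ) + c := by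
          refine pow_le_of_paths B j m k _ fun q hq0 hqm => ?_
          set p : ℕ → Fin n := fun t => if t = 0 then i else q (t - 1) with hp
          have hpval : ∀ t, p (t + 1) = q t := fun t => by simp [hp]
          have h0 : pathW B (m+1) p ≤ c := h p (by simp [hp]) (by simpa [hp] using hqm)
          rw [pathW_succ'] at h0
          have he : (fun t => p (t + 1)) = q := funext hpval
          have hp0 : p 0 = i := by simp [hp]
          rw [he, hpval 0, hq0, hp0, hb] at h0
          calc pathW B m q = ((-b:ℝ) : WithBot ℝ) + (((b:ℝ):WithBot ℝ) + pathW B m q) :=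
                (wb_cancel b _).symm
            _ ≤ ((-b:ℝ) : WithBot ℝ) + c := add_le_add_right h0 _
        calc ((b:ℝ):WithBot ℝ) + mpPow B m k j
            ≤ ((b:ℝ):WithBot ℝ) + (((-b:ℝ):WithBot ℝ) + c) := add_le_add_right hkey _
          _ = c := by rw [← add_assoc, ← WithBot.coe_add, add_neg_cancel, WithBot.coe_zero, zero_add]

lemma pow_n_le_star {n : ℕ} (B : Fin n → Fin n → WithBot ℝ)
    (hTr : ∀ m : ℕ, 1 ≤ m → m ≤ n → mpTr (mpPow B m) ≤ ((0 : ℝ) : WithBot ℝ)) :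
    ∀ i j, mpPow B n i j ≤ mpStar B i j := by
  intro i j
  refine pow_le_of_paths B j n i _ fun p hp0 hpn => ?_
  -- pigeonhole: some vertex repeats among p 0, ..., p n
  obtain ⟨s, t, hst, hpe⟩ : ∃ s t : ℕ, s < t ∧ t ≤ n ∧ p s = p t := by
    obtain ⟨a, b, hab, h⟩ := Fintype.exists_ne_map_eq_of_card_lt
      (fun t : Fin (n+1) => p t) (by simp)
    rcases hab.lt_or_gt with h' | h'
    · exact ⟨a, b, h', Nat.lt_succ_iff.1 b.isLt, h⟩
    · exact ⟨b, a, h', Nat.lt_succ_iff.1 a.isLt, h.symm⟩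
  obtain ⟨htn, hps⟩ := hpe
  set d : ℕ := t - s with hd
  set e : ℕ := n - t with he
  have hd1 : 1 ≤ d := by omega
  have hsd : s + d = t := by omega
  have hten : t + e = n := by omega
  set f : ℕ → WithBot ℝ := fun r => B (p r) (p (r + 1)) with hf
  -- split the path sum
  have hsplit : pathW B n p =
      (∑ r ∈ Finset.Ico 0 s, f r) + ((∑ r ∈ Finset.Ico s t, f r) + ∑ r ∈ Finset.Ico t n, f r) := by
    unfold pathW
    rw [Finset.range_eq_Ico]
    show (∑ r ∈ Finset.Ico 0 n, f r) = _
    rw [← Finset.sum_Ico_consecutive f (Nat.zero_le t) htn,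
        ← Finset.sum_Ico_consecutive f (Nat.zero_le s) hst.le, add_assoc]
  -- the cycle part is ≤ 0
  have hcycle : (∑ r ∈ Finset.Ico s t, f r) ≤ ((0 : ℝ) : WithBot ℝ) := by
    have h1 : (∑ r ∈ Finset.Ico s t, f r) = pathW B d (fun r => p (s + r)) := by
      rw [Finset.sum_Ico_eq_sum_range]
      refine Finset.sum_congr rfl fun r _ => ?_
      unfold f
      congr 1 <;> congr 1 <;> omega
    have h2 := pathW_le_pow B d (fun r => p (s + r))
    have h3 : p (s + d) = p s := by rw [hsd, ← hps]
    rw [h1]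
    refine h2.trans ?_
    rw [h3]
    simp only [Nat.add_zero]
    calc mpPow B d (p s) (p s) ≤ mpTr (mpPow B d) := Finset.le_sup (f := fun v => mpPow B d v v) (mem_univ (p s))
      _ ≤ ((0 : ℝ) : WithBot ℝ) := hTr d hd1 (by omega)
  -- the shortcut path
  set p' : ℕ → Fin n := fun r => if r < s then p r else p (r + d) with hp'
  have hshort : (∑ r ∈ Finset.Ico 0 s, f r) + (∑ r ∈ Finset.Ico t n, f r)
      = pathW B (s + e) p' := by
    unfold pathW
    rw [Finset.range_eq_Ico, ← Finset.sum_Ico_consecutive _ (Nat.zero_le s) (Nat.le_add_right s e)]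
    congr 1
    · refine Finset.sum_congr rfl fun r hr => ?_
      have hr' : r < s := (Finset.mem_Ico.1 hr).2
      have e1 : p' r = p r := by simp [hp', hr']
      have e2 : p' (r + 1) = p (r + 1) := by
        by_cases h : r + 1 < s
        · simp [hp', h]
        · have : r + 1 = s := by omega
          simp only [hp', if_neg (by omega : ¬ r + 1 < s)]
          rw [this, hsd, ← hps]
      rw [e1, e2]
    · rw [Finset.sum_Ico_eq_sum_range, Finset.sum_Ico_eq_sum_range]
      have : n - t = s + e - s := by omega
      rw [this]
      refine Finset.sum_congr rfl fun r _ => ?_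
      have e1 : p' (s + r) = p (t + r) := by
        simp only [hp', if_neg (by omega : ¬ s + r < s)]
        congr 1; omega
      have e2 : p' (s + r + 1) = p (t + r + 1) := by
        simp only [hp', if_neg (by omega : ¬ s + r + 1 < s)]
        congr 1; omega
      unfold f
      rw [e1, e2]
  -- the shortcut path is bounded by the star
  have hshort2 : pathW B (s + e) p' ≤ mpStar B i j := by
    refine (pathW_le_pow B (s + e) p').trans ?_
    have e0 : p' 0 = i := by
      by_cases h : 0 < s
      · simp [hp', h, hp0]
      · have hs0 : s = 0 := by omega
        simp only [hp', if_neg (by omega : ¬ (0:ℕ) < s), Nat.zero_add]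
        rw [show d = t from by omega, ← hps, hs0, hp0]
    have e1 : p' (s + e) = j := by
      simp only [hp', if_neg (by omega : ¬ s + e < s)]
      rw [show s + e + d = n from by omega, hpn]
    rw [e0, e1]
    exact Finset.le_sup (f := fun m => mpPow B m i j) (Finset.mem_range.2 (by omega))
  -- combine
  calc pathW B n p
      = (∑ r ∈ Finset.Ico s t, f r) +
        ((∑ r ∈ Finset.Ico 0 s, f r) + ∑ r ∈ Finset.Ico t n, f r) := by
        rw [hsplit, add_left_comm]
    _ ≤ ((0:ℝ) : WithBot ℝ) + pathW B (s + e) p' := by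
        rw [hshort]; exact add_le_add_left hcycle _
    _ = pathW B (s + e) p' := by rw [WithBot.coe_zero, zero_add]
    _ ≤ mpStar B i j := hshort2

lemma mpMulVec_diag {n : ℕ} (c : ℝ) (w : Fin n → WithBot ℝ) (i : Fin n) :
    mpMulVec (fun i j => if i = j then ((c : ℝ) : WithBot ℝ) else ⊥) w i
      = ((c : ℝ) : WithBot ℝ) + w i := by
  apply le_antisymm
  · refine Finset.sup_le fun j _ => ?_
    by_cases h : i = j
    · subst h; simp
    · simp [h]
  · have := Finset.le_sup
      (f := fun j => (if i = j then ((c : ℝ) : WithBot ℝ) else ⊥) + w j) (mem_univ i)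
    simpa [mpMulVec] using this

lemma mpMulVec_star {n : ℕ} (B : Fin n → Fin n → WithBot ℝ) (v : Fin n → WithBot ℝ) (i : Fin n) :
    mpMulVec (mpStar B) v i = (range n).sup fun m => mpMulVec (mpPow B m) v i := by
  show (univ.sup fun j => ((range n).sup fun m => mpPow B m i j) + v j) = _
  calc (univ.sup fun j => ((range n).sup fun m => mpPow B m i j) + v j)
      = univ.sup fun j => (range n).sup fun m => mpPow B m i j + v j :=
        Finset.sup_congr rfl fun j _ => sup_add_distrib _ _ _
    _ = (range n).sup fun m => univ.sup fun j => mpPow B m i j + v j := Finset.sup_comm _ _ _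

/-- Let `A_k ≤ A` have exactly one finite entry in each row, `λ₁ ∈ ℝ`, and set
`B_k = A_k⁻ (A ⊕ λ₁ I)`. If `Tr(B_k) ≤ 𝟙`, then for any regular `u ∈ ℝⁿ`,
the vector `x = B_k* u` satisfies `x ≤ λ₁⁻¹ A x`. -/
theorem maxplus_Bk_star_solves (n : ℕ) (A Ak : Fin n → Fin n → WithBot ℝ)
    (hle : ∀ i j : Fin n, Ak i j ≤ A i j)
    (hrow : ∀ i : Fin n, ∃! j : Fin n, Ak i j ≠ ⊥)
    (l₁ : ℝ)
    (Bk : Fin n → Fin n → WithBot ℝ)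
    (hBk : Bk = mpMul (mpConj Ak)
        (fun i j => A i j ⊔ (if i = j then ((l₁ : ℝ) : WithBot ℝ) else ⊥)))
    (hTr : ∀ m : ℕ, 1 ≤ m → m ≤ n → mpTr (mpPow Bk m) ≤ ((0 : ℝ) : WithBot ℝ))
    (u : Fin n → ℝ) (x : Fin n → WithBot ℝ)
    (hx : x = mpMulVec (mpStar Bk) (fun j => ((u j : ℝ) : WithBot ℝ))) :
    ∀ i : Fin n, x i ≤ ((-l₁ : ℝ) : WithBot ℝ) + mpMulVec A x i := by
  intro i
  set u' : Fin n → WithBot ℝ := fun j => ((u j : ℝ) : WithBot ℝ) with hu'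
  set S : Fin n → Fin n → WithBot ℝ :=
    fun i j => A i j ⊔ (if i = j then ((l₁ : ℝ) : WithBot ℝ) else ⊥) with hS
  set L : Fin n → Fin n → WithBot ℝ :=
    fun i j => if i = j then ((l₁ : ℝ) : WithBot ℝ) else ⊥ with hL
  -- A · Ak⁻ has nonnegative diagonal
  have hAconj : ∀ i : Fin n, ((0 : ℝ) : WithBot ℝ) ≤ mpMul A (mpConj Ak) i i := by
    intro i
    obtain ⟨j₀, hj₀, -⟩ := hrow i
    obtain ⟨a, ha⟩ := WithBot.ne_bot_iff_exists.1 hj₀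
    refine le_trans ?_ (Finset.le_sup (f := fun k => A i k + mpConj Ak k i) (mem_univ j₀))
    have h1 : mpConj Ak j₀ i = ((-a : ℝ) : WithBot ℝ) := by
      unfold mpConj; rw [← ha]; rfl
    have h2 : ((a : ℝ) : WithBot ℝ) ≤ A i j₀ := ha ▸ hle i j₀
    show ((0 : ℝ) : WithBot ℝ) ≤ A i j₀ + mpConj Ak j₀ i
    rw [h1]
    calc ((0 : ℝ) : WithBot ℝ) = ((a : ℝ) : WithBot ℝ) + ((-a : ℝ) : WithBot ℝ) := by
          rw [← WithBot.coe_add]; norm_num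
      _ ≤ A i j₀ + ((-a : ℝ) : WithBot ℝ) := add_le_add_left h2 _
  -- λ₁ I ≤ A Bk
  have hLB : ∀ i j : Fin n, L i j ≤ mpMul A Bk i j := by
    intro i j
    by_cases h : i = j
    · subst h
      rw [hL]
      simp only [if_pos rfl]
      rw [hBk, ← mpMul_assoc]
      refine le_trans ?_
        (Finset.le_sup (f := fun k => mpMul A (mpConj Ak) i k + S k i) (mem_univ i))
      have hSd : ((l₁ : ℝ) : WithBot ℝ) ≤ S i i := by
        rw [hS]; simp only [if_pos rfl]; exact le_sup_right
      calc ((l₁ : ℝ) : WithBot ℝ) = ((0 : ℝ) : WithBot ℝ) + ((l₁ : ℝ) : WithBot ℝ) := by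
            rw [WithBot.coe_zero, zero_add]
        _ ≤ mpMul A (mpConj Ak) i i + S i i := add_le_add (hAconj i) hSd
    · rw [hL]; simp [h]
  -- every power up to n is below the star
  have hpowstar : ∀ r : ℕ, r ≤ n → ∀ i j : Fin n, mpPow Bk r i j ≤ mpStar Bk i j := by
    intro r hr i j
    rcases lt_or_eq_of_le hr with h | h
    · exact Finset.le_sup (f := fun m => mpPow Bk m i j) (Finset.mem_range.2 h)
    · subst h; exact pow_n_le_star Bk hTr i j
  -- main estimate for each power
  have hmain : ∀ m : ℕ, m < n →
      mpMulVec (mpPow Bk m) u' i ≤ ((-l₁ : ℝ) : WithBot ℝ) + mpMulVec A x i := by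
    intro m hm
    have hAXm : ((l₁ : ℝ) : WithBot ℝ) + mpMulVec (mpPow Bk m) u' i ≤ mpMulVec A x i := by
      calc ((l₁ : ℝ) : WithBot ℝ) + mpMulVec (mpPow Bk m) u' i
          = mpMulVec L (mpMulVec (mpPow Bk m) u') i := (mpMulVec_diag l₁ _ i).symm
        _ = mpMulVec (mpMul L (mpPow Bk m)) u' i := by rw [mpMulVec_mul]
        _ ≤ mpMulVec (mpMul (mpMul A Bk) (mpPow Bk m)) u' i :=
            mpMulVec_le_mat (mpMul_le_mul_left hLB _) _ _
        _ = mpMulVec (mpMul A (mpPow Bk (m + 1))) u' i := by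
            rw [mpMul_assoc]; rfl
        _ = mpMulVec A (mpMulVec (mpPow Bk (m + 1)) u') i := by rw [mpMulVec_mul]
        _ ≤ mpMulVec A x i := by
            refine mpMulVec_le_vec A (fun j => ?_) i
            rw [hx]
            exact mpMulVec_le_mat (hpowstar (m + 1) (by omega)) u' j
    calc mpMulVec (mpPow Bk m) u' i
        = ((-l₁ : ℝ) : WithBot ℝ) + (((l₁ : ℝ) : WithBot ℝ) + mpMulVec (mpPow Bk m) u' i) :=
          (wb_cancel l₁ _).symm
      _ ≤ ((-l₁ : ℝ) : WithBot ℝ) + mpMulVec A x i := add_le_add_right hAXm _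
  have hxi : x i = (range n).sup fun m => mpMulVec (mpPow Bk m) u' i := by
    rw [hx, mpMulVec_star]
  rw [hxi]
  exact Finset.sup_le fun m hm => hmain m (Finset.mem_range.1 hm)
end
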